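/- Let (x^i)_{i=1}^N, (v^i)_{i=1}^{N−1} be a solution of the particle system on (0, t'). Then each v^i is continuously differentiable on (0, t'), and for every t ∈ (0, t') and every i ∈ {1, …, N−1}: if v^{i−1}_t ≤ v^i_t and v^{i+1}_t ≤ v^i_t then (d/dt) v^i_t ≤ 0, and if v^{i−1}_t ≥ v^i_t and v^{i+1}_t ≥ v^i_t then (d/dt) v^i_t ≥ 0 (with the convention v⁰_t = v^N_t = 0). -/

import Mathlib

open MeasureTheory Set Filter
open scoped ENNReal NNReal
open scoped Topology

/-- The velocity field `a(v) = f(v)/v`, extended by `a(0) = f'(0)`. -/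
noncomputable def aF (f : ℝ → ℝ) (v : ℝ) : ℝ :=
  if v = 0 then deriv f 0 else f v / v

/-- The particle velocity `V(v_l, v_r)`: the minimum of `a` over `[v_l, v_r]` if
`v_l ≤ v_r`, and the maximum of `a` over `[v_r, v_l]` if `v_r ≤ v_l`. -/
noncomputable def pV (f : ℝ → ℝ) (vl vr : ℝ) : ℝ :=
  if vl ≤ vr then sInf (aF f '' Set.Icc vl vr) else sSup (aF f '' Set.Icc vr vl)

/-- A solution of the particle system `ẋ^i = V(v^{i-1}, v^i)`,
`v^i_t = v₀^i Δx₀^i / Δx^i_t` on the time interval `[0, t')`, with the conventions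
`v⁰ ≡ 0`, `v^N ≡ 0`. -/
structure IsParticleSol (f : ℝ → ℝ) (N : ℕ) (x₀ v₀ : ℕ → ℝ) (t' : ℝ)
    (x v : ℕ → ℝ → ℝ) : Prop where
  init : ∀ i, 1 ≤ i → i ≤ N → x i 0 = x₀ i
  cont : ∀ i, 1 ≤ i → i ≤ N → ContinuousOn (x i) (Set.Ico 0 t')
  order : ∀ t ∈ Set.Ioo (0:ℝ) t', ∀ i, 1 ≤ i → i < N → x i t < x (i+1) t
  vzero : ∀ t, v 0 t = 0
  vN : ∀ t, v N t = 0
  ode : ∀ i, 1 ≤ i → i ≤ N → ∀ t ∈ Set.Ioo (0:ℝ) t',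
    HasDerivAt (x i) (pV f (v (i-1) t) (v i t)) t
  mass : ∀ i, 1 ≤ i → i < N → ∀ t ∈ Set.Ico (0:ℝ) t',
    v i t = v₀ i * (x₀ (i+1) - x₀ i) / (x (i+1) t - x i t)

lemma aF_cont (f : ℝ → ℝ) (K : ℝ≥0) (hf : LipschitzWith K f) (hf0 : f 0 = 0)
    (hfd : DifferentiableAt ℝ f 0) : Continuous (aF f) := by
  rw [continuous_iff_continuousAt]
  intro v₀
  rcases eq_or_ne v₀ 0 with rfl | hv
  · have hslope : Tendsto (slope f 0) (𝓝[≠] 0) (𝓝 (deriv f 0)) :=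
      hasDerivAt_iff_tendsto_slope.mp hfd.hasDerivAt
    have heq : aF f =ᶠ[𝓝[≠] (0:ℝ)] slope f 0 := by
      filter_upwards [self_mem_nhdsWithin] with w hw
      have hw' : w ≠ 0 := hw
      simp [aF, hw', slope_def_field, hf0]
    have htd : Tendsto (aF f) (𝓝[≠] (0:ℝ)) (𝓝 (aF f 0)) := by
      rw [show aF f 0 = deriv f 0 from if_pos rfl]
      exact hslope.congr' heq.symm
    rw [ContinuousAt, ← nhdsNE_sup_pure (0:ℝ), tendsto_sup]
    exact ⟨htd, tendsto_pure_nhds _ _⟩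
  · have hca : ContinuousAt (fun w => f w / w) v₀ :=
      (hf.continuous.continuousAt).div continuousAt_id hv
    apply hca.congr
    filter_upwards [isOpen_compl_singleton.mem_nhds hv] with w hw
    have hw' : w ≠ 0 := hw
    simp [aF, hw']

lemma proj_close {a b a' b' δ w : ℝ} (hab : a ≤ b) (ha : |a - a'| < δ) (hb : |b - b'| < δ)
    (hw : w ∈ Set.Icc a' b') : ∃ w' ∈ Set.Icc a b, |w' - w| < δ := by
  have hδ : 0 < δ := lt_of_le_of_lt (abs_nonneg _) ha
  rcases le_total w a with h | h
  · refine ⟨a, ⟨le_refl a, hab⟩, ?_⟩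
    have h1 : a' ≤ w := hw.1
    have h2 : a - a' ≤ |a - a'| := le_abs_self _
    rw [abs_of_nonneg (by linarith)]
    linarith
  · rcases le_total w b with h2 | h2
    · exact ⟨w, ⟨h, h2⟩, by simpa using hδ⟩
    · refine ⟨b, ⟨hab, le_refl b⟩, ?_⟩
      have h1 : w ≤ b' := hw.2
      have h3 : b' - b ≤ |b - b'| := by rw [abs_sub_comm]; exact le_abs_self _
      rw [abs_of_nonpos (by linarith)]
      linarith

lemma csInf_image_Icc_le (g : ℝ → ℝ) (hg : Continuous g) {a b a' b' δ ε : ℝ}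
    (hab : a ≤ b) (hab' : a' ≤ b') (ha : |a - a'| < δ) (hb : |b - b'| < δ)
    (H : ∀ p q : ℝ, p ∈ Set.Icc a b ∨ p ∈ Set.Icc a' b' →
      q ∈ Set.Icc a b ∨ q ∈ Set.Icc a' b' → |p - q| < δ → |g p - g q| ≤ ε) :
    sInf (g '' Set.Icc a b) ≤ sInf (g '' Set.Icc a' b') + ε := by
  have hmem := (isCompact_Icc.image hg).sInf_mem ((Set.nonempty_Icc.2 hab').image g)
  obtain ⟨w, hw, hgw⟩ := hmem
  obtain ⟨w', hw', hww'⟩ := proj_close hab ha hb hw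
  have h1 : sInf (g '' Set.Icc a b) ≤ g w' :=
    csInf_le (isCompact_Icc.image hg).bddBelow (Set.mem_image_of_mem g hw')
  have h2 : |g w' - g w| ≤ ε := H w' w (Or.inl hw') (Or.inr hw) hww'
  have h3 : g w' - g w ≤ ε := le_trans (le_abs_self _) h2
  linarith [h1, h3, hgw]

lemma csSup_image_Icc_le (g : ℝ → ℝ) (hg : Continuous g) {a b a' b' δ ε : ℝ}
    (hab : a ≤ b) (hab' : a' ≤ b') (ha : |a - a'| < δ) (hb : |b - b'| < δ)
    (H : ∀ p q : ℝ, p ∈ Set.Icc a b ∨ p ∈ Set.Icc a' b' →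
      q ∈ Set.Icc a b ∨ q ∈ Set.Icc a' b' → |p - q| < δ → |g p - g q| ≤ ε) :
    sSup (g '' Set.Icc a b) ≤ sSup (g '' Set.Icc a' b') + ε := by
  have hmem := (isCompact_Icc.image hg).sSup_mem ((Set.nonempty_Icc.2 hab).image g)
  obtain ⟨w, hw, hgw⟩ := hmem
  obtain ⟨w', hw', hww'⟩ := proj_close hab'
    (by rw [abs_sub_comm]; exact ha) (by rw [abs_sub_comm]; exact hb) hw
  have h1 : g w' ≤ sSup (g '' Set.Icc a' b') :=
    le_csSup (isCompact_Icc.image hg).bddAbove (Set.mem_image_of_mem g hw')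
  have h2 : |g w - g w'| ≤ ε := H w w' (Or.inl hw) (Or.inr hw') (by rw [abs_sub_comm]; exact hww')
  have h3 : g w - g w' ≤ ε := le_trans (le_abs_self _) h2
  linarith [h1, h3, hgw]

lemma pV_self (f : ℝ → ℝ) (a : ℝ) : pV f a a = aF f a := by
  simp [pV, Set.Icc_self]

lemma continuous_pV (f : ℝ → ℝ) (hg : Continuous (aF f)) :
    Continuous (fun p : ℝ × ℝ => pV f p.1 p.2) := by
  set g := aF f with hgdef
  rw [continuous_iff_continuousAt]
  rintro ⟨a₀, b₀⟩
  rw [ContinuousAt, Metric.tendsto_nhds]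
  intro ε hε
  set c : ℝ := min a₀ b₀ - 1 with hc
  set d : ℝ := max a₀ b₀ + 1 with hd
  obtain ⟨δ₀, hδ₀, hH⟩ := (Metric.uniformContinuousOn_iff).mp
    ((isCompact_Icc (a := c) (b := d)).uniformContinuousOn_of_continuous hg.continuousOn)
    (ε/2) (by linarith)
  have hmina : min a₀ b₀ ≤ a₀ := min_le_left _ _
  have hminb : min a₀ b₀ ≤ b₀ := min_le_right _ _
  have hmaxa : a₀ ≤ max a₀ b₀ := le_max_left _ _
  have hmaxb : b₀ ≤ max a₀ b₀ := le_max_right _ _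
  -- generic argument: for any δ ≤ min δ₀ 1 positive
  have main : ∀ δ : ℝ, 0 < δ → δ ≤ δ₀ → δ ≤ 1 →
      ∀ a b a' b' : ℝ, a ≤ b → a' ≤ b' →
      |a - a'| < δ → |b - b'| < δ →
      (Set.Icc a' b' ⊆ Set.Icc c d) → (Set.Icc a b ⊆ Set.Icc c d) →
      ∀ p q : ℝ, p ∈ Set.Icc a b ∨ p ∈ Set.Icc a' b' →
        q ∈ Set.Icc a b ∨ q ∈ Set.Icc a' b' → |p - q| < δ → |g p - g q| ≤ ε/2 := by
    intro δ hδ hδδ₀ hδ1 a b a' b' hab hab' ha hb hsub' hsub p q hp hq hpq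
    have hpK : p ∈ Set.Icc c d := hp.elim (fun h => hsub h) (fun h => hsub' h)
    have hqK : q ∈ Set.Icc c d := hq.elim (fun h => hsub h) (fun h => hsub' h)
    have := hH p hpK q hqK (by rw [Real.dist_eq]; exact lt_of_lt_of_le hpq hδδ₀)
    rw [Real.dist_eq] at this
    exact this.le
  -- the three cases
  rcases lt_trichotomy a₀ b₀ with hlt | hEq | hgt
  · set δ : ℝ := min (min δ₀ 1) ((b₀ - a₀)/2) with hδdef
    have hδ : 0 < δ := lt_min (lt_min hδ₀ one_pos) (by linarith)
    have hδδ₀ : δ ≤ δ₀ := le_trans (min_le_left _ _) (min_le_left _ _)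
    have hδ1 : δ ≤ 1 := le_trans (min_le_left _ _) (min_le_right _ _)
    have hδgap : δ ≤ (b₀ - a₀)/2 := min_le_right _ _
    filter_upwards [prod_mem_nhds (Metric.ball_mem_nhds a₀ hδ) (Metric.ball_mem_nhds b₀ hδ)]
      with p hp
    obtain ⟨hp1, hp2⟩ := hp
    rw [Metric.mem_ball, Real.dist_eq] at hp1 hp2
    have ha1 := abs_lt.mp hp1
    have hb1 := abs_lt.mp hp2
    have hab : p.1 ≤ p.2 := by linarith
    have hsub : Set.Icc p.1 p.2 ⊆ Set.Icc c d :=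
      Set.Icc_subset_Icc (by simp only [hc]; linarith) (by simp only [hd]; linarith)
    have hsub' : Set.Icc a₀ b₀ ⊆ Set.Icc c d :=
      Set.Icc_subset_Icc (by simp only [hc]; linarith) (by simp only [hd]; linarith)
    have H := main δ hδ hδδ₀ hδ1 p.1 p.2 a₀ b₀ hab hlt.le hp1 hp2 hsub' hsub
    have H' : ∀ r s : ℝ, r ∈ Set.Icc a₀ b₀ ∨ r ∈ Set.Icc p.1 p.2 →
        s ∈ Set.Icc a₀ b₀ ∨ s ∈ Set.Icc p.1 p.2 → |r - s| < δ → |g r - g s| ≤ ε/2 :=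
      fun r s hr hs => H r s hr.symm hs.symm
    have h1 := csInf_image_Icc_le g hg hab hlt.le hp1 hp2 H
    have h2 := csInf_image_Icc_le g hg hlt.le hab
      (by rw [abs_sub_comm]; exact hp1) (by rw [abs_sub_comm]; exact hp2) H'
    rw [Real.dist_eq]
    have e1 : pV f p.1 p.2 = sInf (g '' Set.Icc p.1 p.2) := by unfold pV; exact if_pos hab
    have e2 : pV f a₀ b₀ = sInf (g '' Set.Icc a₀ b₀) := by unfold pV; exact if_pos hlt.le
    rw [e1, e2, abs_sub_lt_iff]
    constructor <;> linarith
  · set δ : ℝ := min δ₀ 1 with hδdef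
    have hδ : 0 < δ := lt_min hδ₀ one_pos
    have hδδ₀ : δ ≤ δ₀ := min_le_left _ _
    have hδ1 : δ ≤ 1 := min_le_right _ _
    filter_upwards [prod_mem_nhds (Metric.ball_mem_nhds a₀ hδ) (Metric.ball_mem_nhds b₀ hδ)]
      with p hp
    obtain ⟨hp1, hp2⟩ := hp
    rw [Metric.mem_ball, Real.dist_eq] at hp1 hp2
    have ha1 := abs_lt.mp hp1
    have hb1 := abs_lt.mp hp2
    have e2 : pV f a₀ b₀ = g a₀ := by rw [← hEq]; exact pV_self f a₀
    rw [Real.dist_eq, e2]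
    rcases le_or_gt p.1 p.2 with hab | hab
    · have hsub : Set.Icc p.1 p.2 ⊆ Set.Icc c d :=
        Set.Icc_subset_Icc (by simp only [hc]; linarith) (by simp only [hd]; linarith)
      have hsub' : Set.Icc a₀ b₀ ⊆ Set.Icc c d :=
        Set.Icc_subset_Icc (by simp only [hc]; linarith) (by simp only [hd]; linarith)
      have H := main δ hδ hδδ₀ hδ1 p.1 p.2 a₀ b₀ hab hEq.le hp1 hp2 hsub' hsub
      have H' : ∀ r s : ℝ, r ∈ Set.Icc a₀ b₀ ∨ r ∈ Set.Icc p.1 p.2 →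
          s ∈ Set.Icc a₀ b₀ ∨ s ∈ Set.Icc p.1 p.2 → |r - s| < δ → |g r - g s| ≤ ε/2 :=
        fun r s hr hs => H r s hr.symm hs.symm
      have h1 := csInf_image_Icc_le g hg hab hEq.le hp1 hp2 H
      have h2 := csInf_image_Icc_le g hg hEq.le hab
        (by rw [abs_sub_comm]; exact hp1) (by rw [abs_sub_comm]; exact hp2) H'
      have e1 : pV f p.1 p.2 = sInf (g '' Set.Icc p.1 p.2) := by unfold pV; exact if_pos hab
      have e3 : sInf (g '' Set.Icc a₀ b₀) = g a₀ := by
        rw [← hEq]; simp [Set.Icc_self]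
      rw [e1, ← e3, abs_sub_lt_iff]
      constructor <;> linarith
    · have hba : p.2 ≤ p.1 := hab.le
      have hsub : Set.Icc p.2 p.1 ⊆ Set.Icc c d :=
        Set.Icc_subset_Icc (by simp only [hc]; linarith) (by simp only [hd]; linarith)
      have hsub' : Set.Icc b₀ a₀ ⊆ Set.Icc c d :=
        Set.Icc_subset_Icc (by simp only [hc]; linarith) (by simp only [hd]; linarith)
      have hb0a0 : b₀ ≤ a₀ := hEq.ge
      have H := main δ hδ hδδ₀ hδ1 p.2 p.1 b₀ a₀ hba hb0a0 hp2 hp1 hsub' hsub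
      have H' : ∀ r s : ℝ, r ∈ Set.Icc b₀ a₀ ∨ r ∈ Set.Icc p.2 p.1 →
          s ∈ Set.Icc b₀ a₀ ∨ s ∈ Set.Icc p.2 p.1 → |r - s| < δ → |g r - g s| ≤ ε/2 :=
        fun r s hr hs => H r s hr.symm hs.symm
      have h1 := csSup_image_Icc_le g hg hba hb0a0 hp2 hp1 H
      have h2 := csSup_image_Icc_le g hg hb0a0 hba
        (by rw [abs_sub_comm]; exact hp2) (by rw [abs_sub_comm]; exact hp1) H'
      have e1 : pV f p.1 p.2 = sSup (g '' Set.Icc p.2 p.1) := by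
        unfold pV; exact if_neg (not_le.mpr hab)
      have e3 : sSup (g '' Set.Icc b₀ a₀) = g a₀ := by
        rw [hEq]; simp [Set.Icc_self]
      rw [e1, ← e3, abs_sub_lt_iff]
      constructor <;> linarith
  · set δ : ℝ := min (min δ₀ 1) ((a₀ - b₀)/2) with hδdef
    have hδ : 0 < δ := lt_min (lt_min hδ₀ one_pos) (by linarith)
    have hδδ₀ : δ ≤ δ₀ := le_trans (min_le_left _ _) (min_le_left _ _)
    have hδ1 : δ ≤ 1 := le_trans (min_le_left _ _) (min_le_right _ _)
    have hδgap : δ ≤ (a₀ - b₀)/2 := min_le_right _ _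
    filter_upwards [prod_mem_nhds (Metric.ball_mem_nhds a₀ hδ) (Metric.ball_mem_nhds b₀ hδ)]
      with p hp
    obtain ⟨hp1, hp2⟩ := hp
    rw [Metric.mem_ball, Real.dist_eq] at hp1 hp2
    have ha1 := abs_lt.mp hp1
    have hb1 := abs_lt.mp hp2
    have hba : p.2 ≤ p.1 := by linarith
    have hsub : Set.Icc p.2 p.1 ⊆ Set.Icc c d :=
      Set.Icc_subset_Icc (by simp only [hc]; linarith) (by simp only [hd]; linarith)
    have hsub' : Set.Icc b₀ a₀ ⊆ Set.Icc c d :=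
      Set.Icc_subset_Icc (by simp only [hc]; linarith) (by simp only [hd]; linarith)
    have H := main δ hδ hδδ₀ hδ1 p.2 p.1 b₀ a₀ hba hgt.le hp2 hp1 hsub' hsub
    have H' : ∀ r s : ℝ, r ∈ Set.Icc b₀ a₀ ∨ r ∈ Set.Icc p.2 p.1 →
        s ∈ Set.Icc b₀ a₀ ∨ s ∈ Set.Icc p.2 p.1 → |r - s| < δ → |g r - g s| ≤ ε/2 :=
      fun r s hr hs => H r s hr.symm hs.symm
    have h1 := csSup_image_Icc_le g hg hba hgt.le hp2 hp1 H
    have h2 := csSup_image_Icc_le g hg hgt.le hba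
      (by rw [abs_sub_comm]; exact hp2) (by rw [abs_sub_comm]; exact hp1) H'
    have e1 : pV f p.1 p.2 = sSup (g '' Set.Icc p.2 p.1) := by
      unfold pV; exact if_neg (by push_neg; linarith)
    have e2 : pV f a₀ b₀ = sSup (g '' Set.Icc b₀ a₀) := by
      unfold pV; exact if_neg (by push_neg; exact hgt)
    rw [Real.dist_eq, e1, e2, abs_sub_lt_iff]
    constructor <;> linarith

lemma pV_le_left (f : ℝ → ℝ) (hg : Continuous (aF f)) {vl vr : ℝ} (h : vl ≤ vr) :
    pV f vl vr ≤ aF f vl := by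
  unfold pV
  rw [if_pos h]
  exact csInf_le (isCompact_Icc.image hg).bddBelow
    (Set.mem_image_of_mem _ (Set.left_mem_Icc.2 h))

lemma pV_le_right (f : ℝ → ℝ) (hg : Continuous (aF f)) {vl vr : ℝ} (h : vl ≤ vr) :
    pV f vl vr ≤ aF f vr := by
  unfold pV
  rw [if_pos h]
  exact csInf_le (isCompact_Icc.image hg).bddBelow
    (Set.mem_image_of_mem _ (Set.right_mem_Icc.2 h))

lemma left_le_pV (f : ℝ → ℝ) (hg : Continuous (aF f)) {vl vr : ℝ} (h : vr ≤ vl) :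
    aF f vl ≤ pV f vl vr := by
  unfold pV
  split_ifs with h'
  · have : vl = vr := le_antisymm h' h
    subst this
    simp [Set.Icc_self]
  · exact le_csSup (isCompact_Icc.image hg).bddAbove
      (Set.mem_image_of_mem _ (Set.right_mem_Icc.2 h))

lemma right_le_pV (f : ℝ → ℝ) (hg : Continuous (aF f)) {vl vr : ℝ} (h : vr ≤ vl) :
    aF f vr ≤ pV f vl vr := by
  unfold pV
  split_ifs with h'
  · have : vl = vr := le_antisymm h' h
    subst this
    simp [Set.Icc_self]
  · exact le_csSup (isCompact_Icc.image hg).bddAbove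
      (Set.mem_image_of_mem _ (Set.left_mem_Icc.2 h))

/-- For a solution of the particle system on `(0, t')`, each local density
`v^i` is continuously differentiable on `(0, t')`; its derivative is `≤ 0` at local maxima
(`v^{i−1}_t ≤ v^i_t ≥ v^{i+1}_t`) and `≥ 0` at local minima (`v^{i−1}_t ≥ v^i_t ≤ v^{i+1}_t`). -/
theorem local_density_monotonicity (f : ℝ → ℝ) (K : ℝ≥0) (hf : LipschitzWith K f)
    (hf0 : f 0 = 0) (hfd : DifferentiableAt ℝ f 0)
    (N : ℕ) (hN : 2 ≤ N) (x₀ v₀ : ℕ → ℝ)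
    (hx₀ : ∀ i, 1 ≤ i → i < N → x₀ i < x₀ (i+1))
    (hv₀nn : ∀ i, 1 ≤ i → i < N → 0 ≤ v₀ i)
    (hv₀0 : v₀ 0 = 0) (hv₀N : v₀ N = 0)
    (t' : ℝ) (ht' : 0 < t') (x v : ℕ → ℝ → ℝ)
    (hsol : IsParticleSol f N x₀ v₀ t' x v) :
    ∀ i, 1 ≤ i → i < N →
      (∀ t ∈ Set.Ioo (0:ℝ) t', DifferentiableAt ℝ (v i) t) ∧
      ContinuousOn (deriv (v i)) (Set.Ioo (0:ℝ) t') ∧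
      ∀ t ∈ Set.Ioo (0:ℝ) t',
        ((v (i-1) t ≤ v i t ∧ v (i+1) t ≤ v i t) → deriv (v i) t ≤ 0) ∧
        ((v i t ≤ v (i-1) t ∧ v i t ≤ v (i+1) t) → 0 ≤ deriv (v i) t) := by
  have hac : Continuous (aF f) := aF_cont f K hf hf0 hfd
  have hpVc : Continuous (fun p : ℝ × ℝ => pV f p.1 p.2) := continuous_pV f hac
  intro i hi1 hiN
  set S := Set.Ioo (0:ℝ) t' with hS
  have hvcont : ∀ j, j ≤ N → ContinuousOn (v j) S := by
    intro j hjN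
    rcases Nat.eq_zero_or_pos j with rfl | hj1
    · have h0 : v 0 = fun _ => (0:ℝ) := funext hsol.vzero
      rw [h0]; exact continuousOn_const
    rcases eq_or_lt_of_le hjN with rfl | hjN'
    · have h0 : v j = fun _ => (0:ℝ) := funext hsol.vN
      rw [h0]; exact continuousOn_const
    · have hxj : ContinuousOn (x j) S := (hsol.cont j hj1 hjN).mono Set.Ioo_subset_Ico_self
      have hxj1 : ContinuousOn (x (j+1)) S :=
        (hsol.cont (j+1) (by omega) (by omega)).mono Set.Ioo_subset_Ico_self
      have hne : ∀ t ∈ S, x (j+1) t - x j t ≠ 0 := fun t ht =>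
        sub_ne_zero.2 (hsol.order t ht j hj1 hjN').ne'
      have hform : ContinuousOn (fun t => v₀ j * (x₀ (j+1) - x₀ j) / (x (j+1) t - x j t)) S :=
        ContinuousOn.div continuousOn_const (hxj1.sub hxj) hne
      exact hform.congr fun t ht => hsol.mass j hj1 hjN' t (Set.Ioo_subset_Ico_self ht)
  have hkey : ∀ t ∈ S, HasDerivAt (v i)
      ((0 * (x (i+1) t - x i t) - (v₀ i * (x₀ (i+1) - x₀ i)) *
        (pV f (v i t) (v (i+1) t) - pV f (v (i-1) t) (v i t))) / (x (i+1) t - x i t) ^ 2) t := by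
    intro t ht
    have h1 : HasDerivAt (x i) (pV f (v (i-1) t) (v i t)) t := hsol.ode i hi1 hiN.le t ht
    have h2 : HasDerivAt (x (i+1)) (pV f (v i t) (v (i+1) t)) t := by
      have := hsol.ode (i+1) (by omega) (by omega) t ht
      simpa using this
    have hne : x (i+1) t - x i t ≠ 0 := sub_ne_zero.2 (hsol.order t ht i hi1 hiN).ne'
    have hd := (hasDerivAt_const t (v₀ i * (x₀ (i+1) - x₀ i))).div (h2.sub h1) hne
    apply hd.congr_of_eventuallyEq
    filter_upwards [isOpen_Ioo.mem_nhds ht] with s hs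
    exact hsol.mass i hi1 hiN s (Set.Ioo_subset_Ico_self hs)
  refine ⟨fun t ht => (hkey t ht).differentiableAt, ?_, ?_⟩
  · have heq : Set.EqOn (deriv (v i))
        (fun t => (0 * (x (i+1) t - x i t) - (v₀ i * (x₀ (i+1) - x₀ i)) *
          (pV f (v i t) (v (i+1) t) - pV f (v (i-1) t) (v i t))) / (x (i+1) t - x i t) ^ 2) S :=
      fun t ht => (hkey t ht).deriv
    have hgc : ContinuousOn (fun t => x (i+1) t - x i t) S :=
      ((hsol.cont (i+1) (by omega) (by omega)).mono Set.Ioo_subset_Ico_self).sub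
        ((hsol.cont i hi1 hiN.le).mono Set.Ioo_subset_Ico_self)
    have hp1 : ContinuousOn (fun t => pV f (v i t) (v (i+1) t)) S :=
      hpVc.comp_continuousOn ((hvcont i hiN.le).prodMk (hvcont (i+1) (by omega)))
    have hp0 : ContinuousOn (fun t => pV f (v (i-1) t) (v i t)) S :=
      hpVc.comp_continuousOn ((hvcont (i-1) (by omega)).prodMk (hvcont i hiN.le))
    have hden : ∀ t ∈ S, ((x (i+1) t - x i t)^2) ≠ 0 := fun t ht =>
      pow_ne_zero _ (sub_ne_zero.2 (hsol.order t ht i hi1 hiN).ne')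
    exact (ContinuousOn.div ((continuousOn_const.mul hgc).sub
      (continuousOn_const.mul (hp1.sub hp0))) (hgc.pow 2) hden).congr heq
  · intro t ht
    have hD := (hkey t ht).deriv
    have hgt : 0 < x (i+1) t - x i t := sub_pos.2 (hsol.order t ht i hi1 hiN)
    have hc0 : 0 ≤ v₀ i * (x₀ (i+1) - x₀ i) :=
      mul_nonneg (hv₀nn i hi1 hiN) (by linarith [hx₀ i hi1 hiN])
    constructor
    · rintro ⟨hl, hr⟩
      have hA : pV f (v (i-1) t) (v i t) ≤ aF f (v i t) := pV_le_right f hac hl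
      have hB : aF f (v i t) ≤ pV f (v i t) (v (i+1) t) := left_le_pV f hac hr
      rw [hD]
      rw [div_nonpos_iff]
      refine Or.inr ⟨?_, by positivity⟩
      nlinarith [mul_nonneg hc0
        (by linarith : (0:ℝ) ≤ pV f (v i t) (v (i+1) t) - pV f (v (i-1) t) (v i t))]
    · rintro ⟨hl, hr⟩
      have hA : aF f (v i t) ≤ pV f (v (i-1) t) (v i t) := right_le_pV f hac hl
      have hB : pV f (v i t) (v (i+1) t) ≤ aF f (v i t) := pV_le_left f hac hr
      rw [hD]
      apply div_nonneg _ (by positivity)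
      nlinarith [mul_nonneg hc0
        (by linarith : (0:ℝ) ≤ pV f (v (i-1) t) (v i t) - pV f (v i t) (v (i+1) t))]
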